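/- arXiv:2603.13790 — 2 statements merged into one kernel-verified Lean document; each statement's English description precedes it below -/
import Mathlib

section
/- Let Q ∈ ℝ^{d×r} have full column rank r and let F ∈ ℝ^{d×t} have full column rank t. Set P := F(FᵀF)⁻¹Fᵀ and η := det(Qᵀ(I_d − P)Q). Then η/det(QᵀQ) ∈ [0,1] and ‖FᵀQ‖₂ ≥ σ_min(F) · σ_min(Q) · √(1 − (η/det(QᵀQ))^{1/r}). -/
open Matrix

/-- The spectral norm (largest singular value) of a real matrix, as the operator norm of the
induced linear map between Euclidean spaces. -/
noncomputable def specNorm {m n : ℕ} (A : Matrix (Fin m) (Fin n) ℝ) : ℝ :=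
  ‖LinearMap.toContinuousLinearMap (Matrix.toEuclideanLin A)‖

/-- The smallest singular value of a real matrix: the square root of the smallest eigenvalue of
`AᵀA` (`= AᴴA` over `ℝ`). -/
noncomputable def sigmaMin {m n : ℕ} (A : Matrix (Fin m) (Fin n) ℝ) : ℝ :=
  Real.sqrt (⨅ i, (Matrix.isHermitian_conjTranspose_mul_self A).eigenvalues i)

section Helpers

variable {n : ℕ} {A : Matrix (Fin n) (Fin n) ℝ}

lemma dot_expand (hA : A.IsHermitian) (x : Fin n → ℝ) :
    x ⬝ᵥ (A *ᵥ x) = ∑ i, hA.eigenvalues i * (star (hA.eigenvectorUnitary : Matrix (Fin n) (Fin n) ℝ) *ᵥ x) i ^ 2 ∧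
    x ⬝ᵥ x = ∑ i, (star (hA.eigenvectorUnitary : Matrix (Fin n) (Fin n) ℝ) *ᵥ x) i ^ 2 ∧
    (A *ᵥ x) ⬝ᵥ (A *ᵥ x) = ∑ i, (hA.eigenvalues i)^2 * (star (hA.eigenvectorUnitary : Matrix (Fin n) (Fin n) ℝ) *ᵥ x) i ^ 2 := by
  set U : Matrix (Fin n) (Fin n) ℝ := (hA.eigenvectorUnitary : Matrix (Fin n) (Fin n) ℝ) with hU
  set y := star U *ᵥ x with hy
  have hU1 : star U * U = 1 := Unitary.coe_star_mul_self _
  have hU2 : U * star U = 1 := Unitary.coe_mul_star_self _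
  have hxUy : x = U *ᵥ y := by
    rw [hy, mulVec_mulVec, hU2, one_mulVec]
  have hdot : ∀ z w : Fin n → ℝ, (U *ᵥ z) ⬝ᵥ (U *ᵥ w) = z ⬝ᵥ w := by
    intro z w
    rw [dotProduct_mulVec, ← mulVec_transpose, mulVec_mulVec]
    rw [show Uᵀ = star U from by rw [Matrix.star_eq_conjTranspose, Matrix.conjTranspose_eq_transpose_of_trivial]]
    rw [hU1, one_mulVec]
  have hAx : A *ᵥ x = U *ᵥ (fun i => hA.eigenvalues i * y i) := by
    have hsp : A = U * (diagonal hA.eigenvalues) * star U := by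
      simpa using hA.spectral_theorem
    have h2 : A *ᵥ x = (U * (diagonal hA.eigenvalues) * star U) *ᵥ x := congrArg (· *ᵥ x) hsp
    rw [h2, ← mulVec_mulVec, ← mulVec_mulVec, ← hy]
    funext i
    simp only [mulVec, dotProduct, mulVec_diagonal]
    refine Finset.sum_congr rfl fun k _ => ?_
    congr 1
    simp [diagonal_apply, Finset.mul_sum]
  refine ⟨?_, ?_, ?_⟩
  · conv_lhs => rw [hAx, hxUy, hdot]
    simp [dotProduct, pow_two]
    exact Finset.sum_congr rfl fun i _ => by ring
  · conv_lhs => rw [hxUy, hdot]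
    simp [dotProduct, pow_two]
  · rw [hAx, hdot]
    simp [dotProduct, pow_two]
    exact Finset.sum_congr rfl fun i _ => by ring

lemma rayleigh_lower (hA : A.IsHermitian) (x : Fin n → ℝ) :
    (⨅ i, hA.eigenvalues i) * (x ⬝ᵥ x) ≤ x ⬝ᵥ (A *ᵥ x) := by
  obtain ⟨h1, h2, -⟩ := dot_expand hA x
  rw [h1, h2, Finset.mul_sum]
  refine Finset.sum_le_sum fun i _ => ?_
  exact mul_le_mul_of_nonneg_right (ciInf_le (Set.Finite.bddBelow (Set.finite_range _)) i) (sq_nonneg _)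

lemma mulVec_sq_lower (hA : A.IsHermitian) (hP : A.PosSemidef) (x : Fin n → ℝ) :
    (⨅ i, hA.eigenvalues i) * (x ⬝ᵥ (A *ᵥ x)) ≤ (A *ᵥ x) ⬝ᵥ (A *ᵥ x) := by
  obtain ⟨h1, -, h3⟩ := dot_expand hA x
  rw [h1, h3, Finset.mul_sum]
  refine Finset.sum_le_sum fun i _ => ?_
  rw [← mul_assoc, pow_two (hA.eigenvalues i)]
  refine mul_le_mul_of_nonneg_right ?_ (sq_nonneg _)
  exact mul_le_mul_of_nonneg_right (ciInf_le (Set.Finite.bddBelow (Set.finite_range _)) i)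
    (hP.eigenvalues_nonneg i)

lemma exists_unit_eigenvector (hA : A.IsHermitian) (i : Fin n) :
    ∃ u : Fin n → ℝ, u ⬝ᵥ u = 1 ∧ A *ᵥ u = hA.eigenvalues i • u := by
  refine ⟨⇑(hA.eigenvectorBasis i), ?_, hA.mulVec_eigenvectorBasis i⟩
  have h := hA.eigenvectorBasis.orthonormal.1 i
  have h2 : @inner ℝ _ _ (hA.eigenvectorBasis i) (hA.eigenvectorBasis i) = 1 := by
    rw [real_inner_self_eq_norm_sq, h]; norm_num
  rw [PiLp.inner_apply] at h2
  simpa [dotProduct, RCLike.inner_apply, pow_two] using h2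

lemma posDef_of_rank {d n : ℕ} (M : Matrix (Fin d) (Fin n) ℝ) (h : M.rank = n) :
    (Mᵀ * M).PosDef := by
  refine PosDef.of_dotProduct_mulVec_pos (isHermitian_conjTranspose_mul_self M) fun x hx => ?_
  have hker : LinearMap.ker M.mulVecLin = ⊥ := by
    have h1 := LinearMap.finrank_range_add_finrank_ker M.mulVecLin
    unfold Matrix.rank at h
    rw [show Module.finrank ℝ (Fin n → ℝ) = n by simp] at h1
    have : Module.finrank ℝ (LinearMap.ker M.mulVecLin) = 0 := by omega
    exact Submodule.finrank_eq_zero.mp this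
  have hMx : M *ᵥ x ≠ 0 := by
    intro h0
    apply hx
    exact (LinearMap.ker_eq_bot.mp hker) (show M.mulVecLin x = M.mulVecLin 0 by
      simp [mulVecLin_apply, h0])
  have heq : star x ⬝ᵥ ((Mᵀ * M) *ᵥ x) = (M *ᵥ x) ⬝ᵥ (M *ᵥ x) := by
    rw [← mulVec_mulVec, dotProduct_mulVec, star_trivial, vecMul_transpose]
  rw [heq]
  have h0 : 0 ≤ (M *ᵥ x) ⬝ᵥ (M *ᵥ x) := by
    rw [show ((M *ᵥ x) ⬝ᵥ (M *ᵥ x)) = ∑ i, (M *ᵥ x) i * (M *ᵥ x) i from rfl]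
    exact Finset.sum_nonneg fun i _ => mul_self_nonneg _
  exact lt_of_le_of_ne h0 (Ne.symm fun hc => hMx (dotProduct_self_eq_zero.mp hc))

lemma mulVec_dot_le_specNorm {d n : ℕ} (M : Matrix (Fin d) (Fin n) ℝ) (v : Fin n → ℝ) :
    (M *ᵥ v) ⬝ᵥ (M *ᵥ v) ≤ specNorm M ^ 2 * (v ⬝ᵥ v) := by
  have hv : ∀ (k : ℕ) (w : Fin k → ℝ), w ⬝ᵥ w = ‖(WithLp.equiv 2 (Fin k → ℝ)).symm w‖ ^ 2 := by
    intro k w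
    rw [EuclideanSpace.norm_eq]
    rw [Real.sq_sqrt (Finset.sum_nonneg fun i _ => sq_nonneg _)]
    simp [dotProduct, pow_two]
  have hle := (LinearMap.toContinuousLinearMap (Matrix.toEuclideanLin M)).le_opNorm
    ((WithLp.equiv 2 (Fin n → ℝ)).symm v)
  have happ : (LinearMap.toContinuousLinearMap (Matrix.toEuclideanLin M))
      ((WithLp.equiv 2 (Fin n → ℝ)).symm v) = (WithLp.equiv 2 (Fin d → ℝ)).symm (M *ᵥ v) := by
    simp [WithLp.equiv_symm_apply, Matrix.toEuclideanLin_apply_piLp_toLp]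
  rw [happ] at hle
  rw [hv, hv]
  calc ‖(WithLp.equiv 2 (Fin d → ℝ)).symm (M *ᵥ v)‖ ^ 2
      ≤ (specNorm M * ‖(WithLp.equiv 2 (Fin n → ℝ)).symm v‖) ^ 2 := by
        apply pow_le_pow_left₀ (norm_nonneg _) hle
    _ = specNorm M ^ 2 * ‖(WithLp.equiv 2 (Fin n → ℝ)).symm v‖ ^ 2 := by ring

lemma dot_conj {n m : ℕ} (T : Matrix (Fin n) (Fin m) ℝ) (B : Matrix (Fin n) (Fin n) ℝ)
    (x : Fin m → ℝ) :
    (T *ᵥ x) ⬝ᵥ (B *ᵥ (T *ᵥ x)) = x ⬝ᵥ ((Tᵀ * B * T) *ᵥ x) := by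
  rw [← mulVec_mulVec, ← mulVec_mulVec, dotProduct_mulVec x, vecMul_transpose, mulVec_mulVec]

end Helpers

/-- Let `Q ∈ ℝ^{d×r}` and `F ∈ ℝ^{d×t}` have full column rank.  With
`P = F(FᵀF)⁻¹Fᵀ` and `η = det(Qᵀ(I − P)Q)`, we have `η/det(QᵀQ) ∈ [0,1]` and
`‖FᵀQ‖₂ ≥ σ_min(F) · σ_min(Q) · √(1 − (η/det(QᵀQ))^{1/r})`. -/
theorem specNorm_transpose_mul_ge_of_fullRank
    {d r t : ℕ} (Q : Matrix (Fin d) (Fin r) ℝ) (F : Matrix (Fin d) (Fin t) ℝ)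
    (hQ : Q.rank = r) (hF : F.rank = t) :
    0 ≤ (Qᵀ * ((1 : Matrix (Fin d) (Fin d) ℝ) - F * (Fᵀ * F)⁻¹ * Fᵀ) * Q).det / (Qᵀ * Q).det ∧
    (Qᵀ * ((1 : Matrix (Fin d) (Fin d) ℝ) - F * (Fᵀ * F)⁻¹ * Fᵀ) * Q).det / (Qᵀ * Q).det ≤ 1 ∧
    sigmaMin F * sigmaMin Q *
      Real.sqrt (1 -
        ((Qᵀ * ((1 : Matrix (Fin d) (Fin d) ℝ) - F * (Fᵀ * F)⁻¹ * Fᵀ) * Q).det /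
          (Qᵀ * Q).det) ^ ((1 : ℝ) / r)) ≤
      specNorm (Fᵀ * Q) := by
  classical
  set G : Matrix (Fin t) (Fin t) ℝ := (Fᵀ * F)⁻¹ with hGdef
  set P : Matrix (Fin d) (Fin d) ℝ := F * (Fᵀ * F)⁻¹ * Fᵀ with hPdef
  set A : Matrix (Fin r) (Fin r) ℝ := Qᵀ * Q with hAdef
  set K : Matrix (Fin r) (Fin r) ℝ :=
    Qᵀ * ((1 : Matrix (Fin d) (Fin d) ℝ) - F * (Fᵀ * F)⁻¹ * Fᵀ) * Q with hKdef
  set Mx : Matrix (Fin r) (Fin r) ℝ := Qᵀ * P * Q with hMxdef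
  have hFTF : (Fᵀ * F).PosDef := posDef_of_rank F hF
  have hApd : A.PosDef := posDef_of_rank Q hQ
  have hdetF : IsUnit (Fᵀ * F).det := hFTF.det_pos.ne'.isUnit
  have h1 : (Fᵀ * F) * G = 1 := mul_nonsing_inv _ hdetF
  have h2 : G * (Fᵀ * F) = 1 := nonsing_inv_mul _ hdetF
  have hGsym : Gᵀ = G := by
    rw [hGdef, transpose_nonsing_inv, transpose_mul, transpose_transpose]
  have hPsym : Pᵀ = P := by
    rw [hPdef, ← hGdef, transpose_mul, transpose_mul, transpose_transpose, hGsym,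
      Matrix.mul_assoc]
  have hPP : P * P = P := by
    rw [hPdef, ← hGdef]
    calc F * G * Fᵀ * (F * G * Fᵀ) = F * (G * ((Fᵀ * F) * (G * Fᵀ))) := by
          simp only [Matrix.mul_assoc]
      _ = F * (G * Fᵀ) := by rw [← Matrix.mul_assoc (Fᵀ * F) G Fᵀ, h1, Matrix.one_mul]
      _ = F * G * Fᵀ := by rw [Matrix.mul_assoc]
  have hImP : ((1 : Matrix (Fin d) (Fin d) ℝ) - P) * ((1 : Matrix (Fin d) (Fin d) ℝ) - P)
      = 1 - P := by
    rw [Matrix.sub_mul, Matrix.mul_sub, Matrix.mul_sub, hPP, Matrix.one_mul, Matrix.mul_one,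
      Matrix.one_mul, sub_self, sub_zero]
  have hImPsym : ((1 : Matrix (Fin d) (Fin d) ℝ) - P)ᵀ = 1 - P := by
    rw [transpose_sub, transpose_one, hPsym]
  have hKpsd : K.PosSemidef := by
    have hKeq : K = (((1 : Matrix (Fin d) (Fin d) ℝ) - P) * Q)ᴴ
        * (((1 : Matrix (Fin d) (Fin d) ℝ) - P) * Q) := by
      rw [conjTranspose_eq_transpose_of_trivial, transpose_mul, hImPsym, hKdef, ← hPdef]
      calc Qᵀ * (1 - P) * Q = Qᵀ * ((1 - P) * (1 - P)) * Q := by rw [hImP]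
        _ = Qᵀ * (1 - P) * ((1 - P) * Q) := by simp only [Matrix.mul_assoc]
    rw [hKeq]
    exact posSemidef_conjTranspose_mul_self _
  have hMxpsd : Mx.PosSemidef := by
    have hMeq : Mx = (P * Q)ᴴ * (P * Q) := by
      rw [conjTranspose_eq_transpose_of_trivial, transpose_mul, hPsym, hMxdef]
      calc Qᵀ * P * Q = Qᵀ * (P * P) * Q := by rw [hPP]
        _ = Qᵀ * P * (P * Q) := by simp only [Matrix.mul_assoc]
    rw [hMeq]
    exact posSemidef_conjTranspose_mul_self _
  have hAKM : A = K + Mx := by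
    rw [hKdef, hMxdef, hAdef, ← hPdef, Matrix.mul_sub, Matrix.mul_one, Matrix.sub_mul,
      sub_add_cancel]
  -- square root of A
  have hApsd : A.PosSemidef := hApd.posSemidef
  open scoped MatrixOrder in
  set S : Matrix (Fin r) (Fin r) ℝ := CFC.sqrt A with hSdef
  have hSS : S * S = A := by
    open scoped MatrixOrder in exact CFC.sqrt_mul_sqrt_self A hApsd.nonneg
  have hSsym : Sᵀ = S := by
    open scoped MatrixOrder in
    have := (nonneg_iff_posSemidef.mp (CFC.sqrt_nonneg A)).1
    rwa [Matrix.IsHermitian, conjTranspose_eq_transpose_of_trivial] at this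
  have hdetA : 0 < A.det := hApd.det_pos
  have hdetSS : S.det * S.det = A.det := by rw [← det_mul, hSS]
  have hs0 : S.det ≠ 0 := by
    intro h0
    rw [h0, mul_zero] at hdetSS
    exact hdetA.ne' hdetSS.symm
  have hdetS : IsUnit S.det := isUnit_iff_ne_zero.mpr hs0
  have hS1 : S * S⁻¹ = 1 := mul_nonsing_inv _ hdetS
  have hS2 : S⁻¹ * S = 1 := nonsing_inv_mul _ hdetS
  have hSisym : (S⁻¹)ᵀ = S⁻¹ := by rw [transpose_nonsing_inv, hSsym]
  set C : Matrix (Fin r) (Fin r) ℝ := S⁻¹ * K * S⁻¹ with hCdef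
  have hCpsd : C.PosSemidef := by
    have := hKpsd.mul_mul_conjTranspose_same S⁻¹
    rwa [conjTranspose_eq_transpose_of_trivial, hSisym] at this
  have hCH : C.IsHermitian := hCpsd.1
  have hSAS : S⁻¹ * A * S⁻¹ = 1 := by
    rw [← hSS]
    calc S⁻¹ * (S * S) * S⁻¹ = (S⁻¹ * S) * (S * S⁻¹) := by simp only [Matrix.mul_assoc]
      _ = 1 := by rw [hS2, hS1, Matrix.one_mul]
  have hICeq : (1 : Matrix (Fin r) (Fin r) ℝ) - C = S⁻¹ * Mx * S⁻¹ := by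
    have h' : (1 : Matrix (Fin r) (Fin r) ℝ) = C + S⁻¹ * Mx * S⁻¹ := by
      rw [← hSAS, hAKM, hCdef, Matrix.mul_add, Matrix.add_mul]
    rw [h', add_sub_cancel_left]
  have hICpsd : ((1 : Matrix (Fin r) (Fin r) ℝ) - C).PosSemidef := by
    rw [hICeq]
    have := hMxpsd.mul_mul_conjTranspose_same S⁻¹
    rwa [conjTranspose_eq_transpose_of_trivial, hSisym] at this
  have hdetC : C.det = K.det / A.det := by
    rw [hCdef, det_mul, det_mul, det_nonsing_inv, Ring.inverse_eq_inv']
    rw [← hdetSS]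
    field_simp
  have hprod : ∏ i, hCH.eigenvalues i = C.det := by
    rw [hCH.det_eq_prod_eigenvalues]; norm_num
  have hε0 : ∀ i, 0 ≤ hCH.eigenvalues i := fun i => hCpsd.eigenvalues_nonneg i
  have hε1 : ∀ i, hCH.eigenvalues i ≤ 1 := by
    intro i
    obtain ⟨u, huu, hCu⟩ := exists_unit_eigenvector hCH i
    have h0 := hICpsd.dotProduct_mulVec_nonneg u
    rw [star_trivial, sub_mulVec, one_mulVec, hCu, dotProduct_sub, dotProduct_smul,
      smul_eq_mul, huu, mul_one] at h0
    linarith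
  have hratio : K.det / A.det = ∏ i, hCH.eigenvalues i := by rw [hprod, hdetC]
  have hr0 : 0 ≤ K.det / A.det := by
    rw [hratio]; exact Finset.prod_nonneg fun i _ => hε0 i
  have hr1 : K.det / A.det ≤ 1 := by
    rw [hratio]; exact Finset.prod_le_one (fun i _ => hε0 i) fun i _ => hε1 i
  refine ⟨hr0, hr1, ?_⟩
  -- part 3
  have hσF0 : 0 ≤ sigmaMin F := Real.sqrt_nonneg _
  have hσQ0 : 0 ≤ sigmaMin Q := Real.sqrt_nonneg _
  have hN0 : 0 ≤ specNorm (Fᵀ * Q) := norm_nonneg _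
  rcases Nat.eq_zero_or_pos r with hr | hr
  · subst hr
    rw [show ((1 : ℝ) / ((0 : ℕ) : ℝ)) = 0 by norm_num, Real.rpow_zero, sub_self,
      Real.sqrt_zero, mul_zero]
    exact hN0
  · haveI : Nonempty (Fin r) := Fin.pos_iff_nonempty.mp hr
    obtain ⟨j, -, hj⟩ := Finset.exists_min_image Finset.univ hCH.eigenvalues
      Finset.univ_nonempty
    set μ := hCH.eigenvalues j with hμdef
    have hμ0 : 0 ≤ μ := hε0 j
    have hμr : μ ^ r ≤ K.det / A.det := by
      rw [hratio]
      calc μ ^ r = ∏ _i : Fin r, μ := by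
            rw [Finset.prod_const, Finset.card_univ, Fintype.card_fin]
        _ ≤ ∏ i, hCH.eigenvalues i :=
            Finset.prod_le_prod (fun i _ => hμ0) fun i _ => hj i (Finset.mem_univ i)
    have hrne : ((r : ℝ)) ≠ 0 := Nat.cast_ne_zero.mpr hr.ne'
    have hμle : μ ≤ (K.det / A.det) ^ ((1 : ℝ) / r) := by
      have h2 := Real.rpow_le_rpow (pow_nonneg hμ0 r) hμr (by positivity : (0:ℝ) ≤ 1 / r)
      rwa [← Real.rpow_natCast μ r, ← Real.rpow_mul hμ0, mul_one_div, div_self hrne,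
        Real.rpow_one] at h2
    -- eigenvector of C
    obtain ⟨u, huu, hCu⟩ := exists_unit_eigenvector hCH j
    set v : Fin r → ℝ := S⁻¹ *ᵥ u with hvdef
    have hvBv : ∀ B : Matrix (Fin r) (Fin r) ℝ, v ⬝ᵥ (B *ᵥ v) = u ⬝ᵥ ((S⁻¹ * B * S⁻¹) *ᵥ u) := by
      intro B
      rw [hvdef, dot_conj, hSisym]
    have hvKv : v ⬝ᵥ (K *ᵥ v) = μ := by
      rw [hvBv, ← hCdef, hCu, dotProduct_smul, smul_eq_mul, huu, mul_one]
    have hvAv : v ⬝ᵥ (A *ᵥ v) = 1 := by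
      rw [hvBv, hSAS, one_mulVec, huu]
    have hvMv : v ⬝ᵥ (Mx *ᵥ v) = 1 - μ := by
      have hMxeq : Mx = A - K := by rw [hAKM, add_sub_cancel_left]
      rw [hMxeq, sub_mulVec, dotProduct_sub, hvAv, hvKv]
    -- relate to w
    set w : Fin t → ℝ := (Fᵀ * Q) *ᵥ v with hwdef
    have hvMv_w : v ⬝ᵥ (Mx *ᵥ v) = w ⬝ᵥ (G *ᵥ w) := by
      have hMxG : Mx = (Fᵀ * Q)ᵀ * G * (Fᵀ * Q) := by
        rw [hMxdef, hPdef, ← hGdef, transpose_mul, transpose_transpose]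
        simp only [Matrix.mul_assoc]
      rw [hMxG, ← dot_conj, hwdef]
    -- sigmaMin Q bound
    have hQpsd : (Qᵀ * Q).PosSemidef := hApd.posSemidef
    have hσQsq : sigmaMin Q ^ 2 = ⨅ i, (Matrix.isHermitian_conjTranspose_mul_self Q).eigenvalues i := by
      rw [sigmaMin, Real.sq_sqrt]
      exact Real.iInf_nonneg fun i => (posSemidef_conjTranspose_mul_self Q).eigenvalues_nonneg i
    have hrayQ : sigmaMin Q ^ 2 * (v ⬝ᵥ v) ≤ 1 := by
      rw [hσQsq, ← hvAv]
      exact rayleigh_lower (Matrix.isHermitian_conjTranspose_mul_self Q) v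
    -- sigmaMin F bound
    have hFpsd : (Fᵀ * F).PosSemidef := hFTF.posSemidef
    have hσFsq : sigmaMin F ^ 2 = ⨅ i, (Matrix.isHermitian_conjTranspose_mul_self F).eigenvalues i := by
      rw [sigmaMin, Real.sq_sqrt]
      exact Real.iInf_nonneg fun i => (posSemidef_conjTranspose_mul_self F).eigenvalues_nonneg i
    have hσFle : sigmaMin F ^ 2 * (w ⬝ᵥ (G *ᵥ w)) ≤ w ⬝ᵥ w := by
      have hBx : (Fᴴ * F) *ᵥ (G *ᵥ w) = w := by
        rw [conjTranspose_eq_transpose_of_trivial, mulVec_mulVec, h1, one_mulVec]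
      have h := mulVec_sq_lower (Matrix.isHermitian_conjTranspose_mul_self F)
        (posSemidef_conjTranspose_mul_self F) (G *ᵥ w)
      rw [hBx] at h
      rw [hσFsq, dotProduct_comm w (G *ᵥ w)]
      exact h
    -- specNorm bound
    have hwN : w ⬝ᵥ w ≤ specNorm (Fᵀ * Q) ^ 2 * (v ⬝ᵥ v) := by
      rw [hwdef]; exact mulVec_dot_le_specNorm _ v
    have hvv0 : 0 ≤ v ⬝ᵥ v := by
      rw [show (v ⬝ᵥ v) = ∑ i, v i * v i from rfl]
      exact Finset.sum_nonneg fun i _ => mul_self_nonneg _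
    -- combine
    have key : sigmaMin F ^ 2 * sigmaMin Q ^ 2 * (1 - (K.det / A.det) ^ ((1 : ℝ) / r))
        ≤ specNorm (Fᵀ * Q) ^ 2 := by
      have e1 : 1 - (K.det / A.det) ^ ((1 : ℝ) / r) ≤ 1 - μ := by linarith
      have e2 : sigmaMin F ^ 2 * (1 - μ) ≤ w ⬝ᵥ w := by
        rw [← hvMv, hvMv_w]; exact hσFle
      have e3 : sigmaMin F ^ 2 * (1 - μ) ≤ specNorm (Fᵀ * Q) ^ 2 * (v ⬝ᵥ v) :=
        e2.trans hwN
      have e4 : sigmaMin Q ^ 2 * (sigmaMin F ^ 2 * (1 - μ))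
          ≤ sigmaMin Q ^ 2 * (specNorm (Fᵀ * Q) ^ 2 * (v ⬝ᵥ v)) :=
        mul_le_mul_of_nonneg_left e3 (sq_nonneg _)
      have e5 : sigmaMin Q ^ 2 * (specNorm (Fᵀ * Q) ^ 2 * (v ⬝ᵥ v))
          = specNorm (Fᵀ * Q) ^ 2 * (sigmaMin Q ^ 2 * (v ⬝ᵥ v)) := by ring
      have e6 : specNorm (Fᵀ * Q) ^ 2 * (sigmaMin Q ^ 2 * (v ⬝ᵥ v))
          ≤ specNorm (Fᵀ * Q) ^ 2 * 1 :=
        mul_le_mul_of_nonneg_left hrayQ (sq_nonneg _)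
      have e7 : sigmaMin F ^ 2 * sigmaMin Q ^ 2 * (1 - (K.det / A.det) ^ ((1 : ℝ) / r))
          ≤ sigmaMin F ^ 2 * sigmaMin Q ^ 2 * (1 - μ) := by
        apply mul_le_mul_of_nonneg_left e1
        positivity
      calc sigmaMin F ^ 2 * sigmaMin Q ^ 2 * (1 - (K.det / A.det) ^ ((1 : ℝ) / r))
          ≤ sigmaMin F ^ 2 * sigmaMin Q ^ 2 * (1 - μ) := e7
        _ = sigmaMin Q ^ 2 * (sigmaMin F ^ 2 * (1 - μ)) := by ring
        _ ≤ specNorm (Fᵀ * Q) ^ 2 * (sigmaMin Q ^ 2 * (v ⬝ᵥ v)) := by rw [← e5]; exact e4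
        _ ≤ specNorm (Fᵀ * Q) ^ 2 * 1 := e6
        _ = specNorm (Fᵀ * Q) ^ 2 := mul_one _
    calc sigmaMin F * sigmaMin Q * Real.sqrt (1 - (K.det / A.det) ^ ((1 : ℝ) / r))
        = Real.sqrt (sigmaMin F ^ 2 * sigmaMin Q ^ 2 * (1 - (K.det / A.det) ^ ((1 : ℝ) / r))) := by
          rw [Real.sqrt_mul (by positivity), Real.sqrt_mul (sq_nonneg _),
            Real.sqrt_sq hσF0, Real.sqrt_sq hσQ0]
      _ ≤ Real.sqrt (specNorm (Fᵀ * Q) ^ 2) := Real.sqrt_le_sqrt key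
      _ = specNorm (Fᵀ * Q) := Real.sqrt_sq hN0
end

section
/- Let U ∈ ℝ^{d×r} and V ∈ ℝ^{d×t} have orthonormal columns, i.e. UᵀU = I_r and VᵀV = I_t. Then det(I_r − UᵀVVᵀU) ∈ [0,1] and ‖VᵀU‖₂² ≥ 1 − det(I_r − UᵀVVᵀU)^{1/r}. -/
open Matrix

lemma norm_sq_eq_dot {n : ℕ} (x : EuclideanSpace ℝ (Fin n)) : ‖x‖ ^ 2 = x ⬝ᵥ x := by
  rw [← real_inner_self_eq_norm_sq]
  simp only [PiLp.inner_apply, dotProduct, RCLike.inner_apply, conj_trivial]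

lemma eigen_bounds {r t : ℕ} (B : Matrix (Fin t) (Fin r) ℝ)
    (hN : ((1 : Matrix (Fin r) (Fin r) ℝ) - Bᵀ * B).PosSemidef) (i : Fin r) :
    1 - specNorm B ^ 2 ≤ hN.1.eigenvalues i ∧ hN.1.eigenvalues i ≤ 1 := by
  set μ := hN.1.eigenvalues i with hμ
  set v := hN.1.eigenvectorBasis i with hv
  set w : Fin r → ℝ := (WithLp.equiv 2 (Fin r → ℝ)) v with hw
  have hv1 : ‖v‖ = 1 := hN.1.eigenvectorBasis.orthonormal.1 i
  have hmv : ((1 : Matrix (Fin r) (Fin r) ℝ) - Bᵀ * B) *ᵥ w = μ • w :=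
    hN.1.mulVec_eigenvectorBasis i
  have hMv : (Bᵀ * B) *ᵥ w = w - μ • w := by
    rw [Matrix.sub_mulVec, Matrix.one_mulVec, sub_eq_iff_eq_add] at hmv
    rw [eq_sub_iff_add_eq, add_comm]
    exact hmv.symm
  have hvv : w ⬝ᵥ w = 1 := by
    have h := norm_sq_eq_dot v
    rw [hv1, one_pow] at h
    exact h.symm
  have hdot : w ⬝ᵥ ((Bᵀ * B) *ᵥ w) = 1 - μ := by
    rw [hMv, dotProduct_sub, dotProduct_smul, smul_eq_mul, hvv]
    ring
  have hdot2 : w ⬝ᵥ ((Bᵀ * B) *ᵥ w) = (B *ᵥ w) ⬝ᵥ (B *ᵥ w) := by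
    rw [← Matrix.mulVec_mulVec, Matrix.dotProduct_mulVec, Matrix.vecMul_transpose]
  have hBnorm : (B *ᵥ w) ⬝ᵥ (B *ᵥ w)
      = ‖(LinearMap.toContinuousLinearMap (Matrix.toEuclideanLin B)) v‖ ^ 2 := by
    rw [norm_sq_eq_dot ((LinearMap.toContinuousLinearMap (Matrix.toEuclideanLin B)) v)]
    rfl
  have hle : ‖(LinearMap.toContinuousLinearMap (Matrix.toEuclideanLin B)) v‖ ≤ specNorm B * ‖v‖ :=
    (LinearMap.toContinuousLinearMap (Matrix.toEuclideanLin B)).le_opNorm v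
  rw [hv1, mul_one] at hle
  have h0 : 0 ≤ ‖(LinearMap.toContinuousLinearMap (Matrix.toEuclideanLin B)) v‖ := norm_nonneg _
  constructor
  · nlinarith [hdot, hdot2, hBnorm]
  · nlinarith [hdot, hdot2, hBnorm]

/-- Let `U ∈ ℝ^{d×r}` and `V ∈ ℝ^{d×t}` have orthonormal columns.  Then
`det(I_r − UᵀVVᵀU) ∈ [0,1]` and `‖VᵀU‖₂² ≥ 1 − det(I_r − UᵀVVᵀU)^{1/r}`. -/
theorem sq_specNorm_ge_one_sub_det_rpow
    {d r t : ℕ} (U : Matrix (Fin d) (Fin r) ℝ) (V : Matrix (Fin d) (Fin t) ℝ)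
    (hU : Uᵀ * U = 1) (hV : Vᵀ * V = 1) :
    0 ≤ ((1 : Matrix (Fin r) (Fin r) ℝ) - Uᵀ * V * Vᵀ * U).det ∧
    ((1 : Matrix (Fin r) (Fin r) ℝ) - Uᵀ * V * Vᵀ * U).det ≤ 1 ∧
    1 - ((1 : Matrix (Fin r) (Fin r) ℝ) - Uᵀ * V * Vᵀ * U).det ^ ((1 : ℝ) / r) ≤
      specNorm (Vᵀ * U) ^ 2 := by
  set B := Vᵀ * U with hB
  have hMeq : Uᵀ * V * Vᵀ * U = Bᵀ * B := by
    rw [hB, transpose_mul, transpose_transpose]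
    simp [Matrix.mul_assoc]
  have hC : ((1 : Matrix (Fin d) (Fin d) ℝ) - V * Vᵀ).PosSemidef := by
    have h1 : ((1 : Matrix (Fin d) (Fin d) ℝ) - V * Vᵀ)ᴴ * ((1 : Matrix (Fin d) (Fin d) ℝ) - V * Vᵀ)
        = 1 - V * Vᵀ := by
      rw [conjTranspose_eq_transpose_of_trivial, transpose_sub, transpose_one, transpose_mul,
        transpose_transpose, Matrix.sub_mul, Matrix.one_mul, Matrix.mul_sub, Matrix.mul_one]
      rw [Matrix.mul_assoc V Vᵀ (V * Vᵀ), ← Matrix.mul_assoc Vᵀ V Vᵀ, hV, Matrix.one_mul]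
      abel
    simpa only [h1] using
      posSemidef_conjTranspose_mul_self ((1 : Matrix (Fin d) (Fin d) ℝ) - V * Vᵀ)
  have hN : ((1 : Matrix (Fin r) (Fin r) ℝ) - Bᵀ * B).PosSemidef := by
    have h2 := hC.conjTranspose_mul_mul_same U
    have h3 : Uᴴ * ((1 : Matrix (Fin d) (Fin d) ℝ) - V * Vᵀ) * U
        = (1 : Matrix (Fin r) (Fin r) ℝ) - Bᵀ * B := by
      rw [conjTranspose_eq_transpose_of_trivial, Matrix.mul_sub, Matrix.mul_one, Matrix.sub_mul,
        hU, hB, transpose_mul, transpose_transpose]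
      simp [Matrix.mul_assoc]
    rwa [h3] at h2
  rw [hMeq]
  have hμ0 : ∀ i, 0 ≤ hN.1.eigenvalues i := hN.eigenvalues_nonneg
  have hμb := eigen_bounds B hN
  have hdet : ((1 : Matrix (Fin r) (Fin r) ℝ) - Bᵀ * B).det = ∏ i, hN.1.eigenvalues i := by
    simpa using hN.1.det_eq_prod_eigenvalues
  have hdet0 : 0 ≤ ((1 : Matrix (Fin r) (Fin r) ℝ) - Bᵀ * B).det := by
    rw [hdet]; exact Finset.prod_nonneg fun i _ => hμ0 i
  have hdet1 : ((1 : Matrix (Fin r) (Fin r) ℝ) - Bᵀ * B).det ≤ 1 := by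
    rw [hdet]
    exact Finset.prod_le_one (fun i _ => hμ0 i) (fun i _ => (hμb i).2)
  refine ⟨hdet0, hdet1, ?_⟩
  have hs0 : 0 ≤ specNorm B ^ 2 := sq_nonneg _
  by_cases hs : 1 ≤ specNorm B ^ 2
  · have : (0 : ℝ) ≤ ((1 : Matrix (Fin r) (Fin r) ℝ) - Bᵀ * B).det ^ ((1 : ℝ) / r) :=
      Real.rpow_nonneg hdet0 _
    linarith
  · push_neg at hs
    rcases Nat.eq_zero_or_pos r with hr | hr
    · subst hr
      have : ((1 : Matrix (Fin 0) (Fin 0) ℝ) - Bᵀ * B).det = 1 := by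
        rw [Subsingleton.elim ((1 : Matrix (Fin 0) (Fin 0) ℝ) - Bᵀ * B) 1, det_one]
      rw [this, Real.one_rpow]
      linarith
    · set s := specNorm B ^ 2 with hsdef
      have h1s : (0 : ℝ) ≤ 1 - s := by linarith
      have hprod : (1 - s) ^ r ≤ ((1 : Matrix (Fin r) (Fin r) ℝ) - Bᵀ * B).det := by
        rw [hdet]
        calc (1 - s) ^ r = ∏ _i : Fin r, (1 - s) := by
              rw [Finset.prod_const, Finset.card_univ, Fintype.card_fin]
          _ ≤ ∏ i, hN.1.eigenvalues i :=
              Finset.prod_le_prod (fun i _ => h1s) (fun i _ => (hμb i).1)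
      have hrne : (r : ℝ) ≠ 0 := Nat.cast_ne_zero.mpr hr.ne'
      have key : 1 - s ≤ ((1 : Matrix (Fin r) (Fin r) ℝ) - Bᵀ * B).det ^ ((1 : ℝ) / r) := by
        have h2 : ((1 - s) ^ r) ^ ((1 : ℝ) / r)
            ≤ ((1 : Matrix (Fin r) (Fin r) ℝ) - Bᵀ * B).det ^ ((1 : ℝ) / r) :=
          Real.rpow_le_rpow (by positivity) hprod (by positivity)
        have h3 : ((1 - s) ^ r : ℝ) ^ ((1 : ℝ) / r) = 1 - s := by
          rw [← Real.rpow_natCast (1 - s) r, ← Real.rpow_mul h1s,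
            mul_one_div, div_self hrne, Real.rpow_one]
        rwa [h3] at h2
      linarith
end
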